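/- Let b ≥ 1 and let W = ⌊X⌋ where X is a random variable with the Laplace density f_b. Then for every integer w, P[W = w − 1] ≤ e^{1/b} · P[W = w]; equivalently, ∫_{[w−1, w)} f_b(x) dx ≤ e^{1/b} · ∫_{[w, w+1)} f_b(x) dx. -/

import Mathlib

open MeasureTheory

/-- The Laplace density with scale `b`. -/
noncomputable def lapDensity (b x : ℝ) : ℝ := 1 / (2 * b) * Real.exp (-|x| / b)

/-- Floored Laplace noise `W = ⌊Lap(b)⌋` with `b ≥ 1` satisfies
`P[W = w − 1] ≤ e^{1/b} · P[W = w]` for every integer `w`; since `W = w` exactly when the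
Laplace sample lies in `[w, w+1)`, this reads
`∫_{[w−1, w)} f_b ≤ e^{1/b} · ∫_{[w, w+1)} f_b`. -/
theorem stmt17 (b : ℝ) (hb : 1 ≤ b) (w : ℤ) :
    ∫ x in Set.Ico ((w : ℝ) - 1) (w : ℝ), lapDensity b x ≤
      Real.exp (1 / b) * ∫ x in Set.Ico (w : ℝ) ((w : ℝ) + 1), lapDensity b x := by
  have hb0 : (0:ℝ) < b := lt_of_lt_of_le one_pos hb
  have hcont : Continuous (lapDensity b) := by
    unfold lapDensity; fun_prop
  have h1 : ∫ x in Set.Ico ((w:ℝ)-1) (w:ℝ), lapDensity b x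
      = ∫ x in ((w:ℝ)-1)..(w:ℝ), lapDensity b x := by
    rw [intervalIntegral.integral_of_le (by linarith),
      MeasureTheory.integral_Ico_eq_integral_Ioo, MeasureTheory.integral_Ioc_eq_integral_Ioo]
  have h2 : ∫ x in Set.Ico (w:ℝ) ((w:ℝ)+1), lapDensity b x
      = ∫ x in (w:ℝ)..((w:ℝ)+1), lapDensity b x := by
    rw [intervalIntegral.integral_of_le (by linarith),
      MeasureTheory.integral_Ico_eq_integral_Ioo, MeasureTheory.integral_Ioc_eq_integral_Ioo]
  rw [h1, h2]
  have h3 : ∫ x in ((w:ℝ)-1)..(w:ℝ), lapDensity b x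
      = ∫ x in (w:ℝ)..((w:ℝ)+1), lapDensity b (x - 1) := by
    rw [intervalIntegral.integral_comp_sub_right (fun x => lapDensity b x) 1]
    norm_num
  rw [h3, ← intervalIntegral.integral_const_mul]
  apply intervalIntegral.integral_mono_on (by linarith)
  · exact (hcont.comp (continuous_id.sub continuous_const)).intervalIntegrable _ _
  · exact (continuous_const.mul hcont).intervalIntegrable _ _
  · intro x _
    unfold lapDensity
    have hexp : Real.exp (-|x-1|/b) ≤ Real.exp (1/b) * Real.exp (-|x|/b) := by
      rw [← Real.exp_add]
      apply Real.exp_le_exp.mpr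
      have habs : |x| ≤ |x-1| + 1 := by
        calc |x| = |(x-1)+1| := by ring_nf
        _ ≤ |x-1| + |1| := abs_add_le _ _
        _ = |x-1| + 1 := by norm_num
      rw [← add_div, div_le_div_iff₀ hb0 hb0]
      nlinarith
    have h12b : (0:ℝ) ≤ 1/(2*b) := by positivity
    calc 1/(2*b) * Real.exp (-|x-1|/b)
        ≤ 1/(2*b) * (Real.exp (1/b) * Real.exp (-|x|/b)) :=
          mul_le_mul_of_nonneg_left hexp h12b
      _ = Real.exp (1/b) * (1/(2*b) * Real.exp (-|x|/b)) := by ring
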